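/- The category of pastures has arbitrary products: for any index set I and any family of pastures (P_i)_{i ∈ I}, there exists a pasture Q together with morphisms of pastures π_j : Q → P_j for each j ∈ I, such that for every pasture P' with morphisms f_i : P' → P_i for each i ∈ I there is a unique morphism of pastures f : P' → Q with π_j ∘ f = f_j for all j ∈ I. -/
import Mathlib


universe u v w

/-- A pasture structure on a type `P`: a multiplication, a zero, a one,
an involution `neg`, and a ternary nullset relation `null a b c`
(meaning "`a + b + c = 0`"). -/
structure PastureStr (P : Type u) where
  mul : P → P → P
  zero : P
  one : P
  neg : P → P
  null : P → P → P → Prop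

/-- `P` together with a `PastureStr` is a pasture: `P` is a commutative
monoid with zero whose nonzero elements form an abelian group, `neg` is an
involution fixing `0`, and the nullset is invariant under permutations,
invariant under multiplication, and satisfies `a + b + 0 = 0 ↔ a = -b`. -/
structure PastureStr.IsPasture {P : Type u} (S : PastureStr P) : Prop where
  mul_comm : ∀ a b : P, S.mul a b = S.mul b a
  mul_assoc : ∀ a b c : P, S.mul (S.mul a b) c = S.mul a (S.mul b c)
  one_mul : ∀ a : P, S.mul S.one a = a
  zero_mul : ∀ a : P, S.mul S.zero a = S.zero
  one_ne_zero : S.one ≠ S.zero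
  mul_ne_zero : ∀ a b : P, a ≠ S.zero → b ≠ S.zero → S.mul a b ≠ S.zero
  exists_inv : ∀ a : P, a ≠ S.zero → ∃ b : P, S.mul a b = S.one
  neg_neg : ∀ a : P, S.neg (S.neg a) = a
  neg_zero : S.neg S.zero = S.zero
  null_swap_left : ∀ a b c : P, S.null a b c → S.null b a c
  null_swap_right : ∀ a b c : P, S.null a b c → S.null a c b
  null_mul : ∀ d a b c : P, S.null a b c → S.null (S.mul d a) (S.mul d b) (S.mul d c)
  null_zero : ∀ a b : P, S.null a b S.zero ↔ a = S.neg b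

/-- A morphism of pastures: a multiplicative map preserving `0`, `1`,
the involution and the nullset. -/
structure PastureStr.IsHom {P : Type u} {P' : Type v} (S : PastureStr P) (T : PastureStr P')
    (f : P → P') : Prop where
  map_mul : ∀ a b : P, f (S.mul a b) = T.mul (f a) (f b)
  map_zero : f S.zero = T.zero
  map_one : f S.one = T.one
  map_neg : ∀ a : P, f (S.neg a) = T.neg (f a)
  map_null : ∀ a b c : P, S.null a b c → T.null (f a) (f b) (f c)

namespace ProdPasture

/-- The Krasner condition on three booleans: not exactly one of them is `true`. -/
abbrev Kr (ε δ γ : Bool) : Prop :=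
  ((ε && !δ && !γ) || (δ && !ε && !γ) || (γ && !ε && !δ)) = false

lemma Kr_swap_left : ∀ ε δ γ, Kr ε δ γ → Kr δ ε γ := by decide
lemma Kr_swap_right : ∀ ε δ γ, Kr ε δ γ → Kr ε γ δ := by decide
lemma Kr_mul : ∀ η ε δ γ, Kr ε δ γ → Kr (η && ε) (η && δ) (η && γ) := by decide
lemma Kr_zero : ∀ ε δ, Kr ε δ false ↔ ε = δ := by decide

section Basic

variable {P : Type u} {S : PastureStr P} (h : S.IsPasture)
include h

lemma mul_zero' (a : P) : S.mul a S.zero = S.zero := by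
  rw [h.mul_comm]; exact h.zero_mul a

lemma neg_eq_zero {a : P} : S.neg a = S.zero ↔ a = S.zero := by
  constructor
  · intro ha; rw [← h.neg_neg a, ha, h.neg_zero]
  · intro ha; rw [ha, h.neg_zero]

lemma eq_zero_of_null_zero_zero {a : P} (hn : S.null a S.zero S.zero) : a = S.zero := by
  rw [(h.null_zero a S.zero), h.neg_zero] at hn; exact hn

/-- A morphism sends nonzero elements to nonzero elements. -/
lemma hom_ne_zero {P' : Type v} {T : PastureStr P'} (h' : T.IsPasture)
    {f : P → P'} (hf : S.IsHom T f) {a : P} (ha : a ≠ S.zero) : f a ≠ T.zero := by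
  obtain ⟨b, hb⟩ := h.exists_inv a ha
  intro hz
  have : T.mul (f a) (f b) = T.one := by rw [← hf.map_mul, hb, hf.map_one]
  rw [hz, h'.zero_mul] at this
  exact h'.one_ne_zero this.symm

/-- If `a+b+c = 0` then it is not the case that exactly one of `a,b,c` is nonzero. -/
lemma not_one_nonzero {a b c : P} (hn : S.null a b c) :
    ¬(a ≠ S.zero ∧ b = S.zero ∧ c = S.zero) ∧
    ¬(b ≠ S.zero ∧ a = S.zero ∧ c = S.zero) ∧
    ¬(c ≠ S.zero ∧ a = S.zero ∧ b = S.zero) := by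
  refine ⟨fun ⟨ha, hb, hc⟩ => ?_, fun ⟨hb, ha, hc⟩ => ?_, fun ⟨hc, ha, hb⟩ => ?_⟩
  · subst hb; subst hc; exact ha (eq_zero_of_null_zero_zero h hn)
  · subst ha; subst hc
    exact hb (eq_zero_of_null_zero_zero h (h.null_swap_left _ _ _ hn))
  · subst ha; subst hb
    exact hc (eq_zero_of_null_zero_zero h
      (h.null_swap_left _ _ _ (h.null_swap_right _ _ _ hn)))

end Basic

end ProdPasture

namespace ProdPasture

section Construction

variable {I : Type v} (P : I → Type u) (S : ∀ i, PastureStr (P i))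

/-- Carrier of the product pasture: a boolean (= "is a unit") together with a
tuple which is everywhere zero or everywhere nonzero, according to the boolean. -/
def Carrier : Type (max u v) :=
  {x : Bool × (∀ i, P i) // ∀ i, x.1 = true ↔ x.2 i ≠ (S i).zero}

variable (hS : ∀ i, (S i).IsPasture)

/-- The pasture structure on the product. -/
def str : PastureStr (Carrier P S) where
  mul a b := ⟨(a.1.1 && b.1.1, fun i => (S i).mul (a.1.2 i) (b.1.2 i)), by
    intro i
    rw [Bool.and_eq_true, a.2 i, b.2 i]
    constructor
    · rintro ⟨ha, hb⟩; exact (hS i).mul_ne_zero _ _ ha hb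
    · intro hm
      constructor
      · intro ha
        exact hm (show (S i).mul (a.1.2 i) (b.1.2 i) = (S i).zero by
          rw [ha, (hS i).zero_mul])
      · intro hb
        exact hm (show (S i).mul (a.1.2 i) (b.1.2 i) = (S i).zero by
          rw [hb, mul_zero' (hS i)])⟩
  zero := ⟨(false, fun i => (S i).zero), fun i => by simp⟩
  one := ⟨(true, fun i => (S i).one), fun i => by simp [(hS i).one_ne_zero]⟩
  neg a := ⟨(a.1.1, fun i => (S i).neg (a.1.2 i)), fun i => by
    rw [a.2 i]; exact (not_congr (neg_eq_zero (hS i))).symm⟩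
  null a b c := (∀ i, (S i).null (a.1.2 i) (b.1.2 i) (c.1.2 i)) ∧ Kr a.1.1 b.1.1 c.1.1

lemma carrier_ext {a b : Carrier P S} (h1 : a.1.1 = b.1.1)
    (h2 : ∀ i, a.1.2 i = b.1.2 i) : a = b :=
  Subtype.ext (Prod.ext h1 (funext h2))

lemma ne_zero_iff (a : Carrier P S) : a ≠ (str P S hS).zero ↔ a.1.1 = true := by
  constructor
  · intro h
    by_contra ht
    have ht' : a.1.1 = false := by
      cases hv : a.1.1
      · rfl
      · exact absurd hv ht
    refine h (carrier_ext P S ht' fun i => ?_)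
    show a.1.2 i = (S i).zero
    by_contra hnz
    exact ht ((a.2 i).mpr hnz)
  · intro h hz
    rw [hz] at h
    exact Bool.noConfusion h

end Construction

end ProdPasture

namespace ProdPasture

variable {I : Type v} (P : I → Type u) (S : ∀ i, PastureStr (P i))
  (hS : ∀ i, (S i).IsPasture)

lemma str_isPasture : (str P S hS).IsPasture where
  mul_comm a b := carrier_ext P S (Bool.and_comm a.1.1 b.1.1) (fun i => (hS i).mul_comm _ _)
  mul_assoc a b c := carrier_ext P S (Bool.and_assoc a.1.1 b.1.1 c.1.1) (fun i => (hS i).mul_assoc _ _ _)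
  one_mul a := carrier_ext P S (Bool.true_and a.1.1) (fun i => (hS i).one_mul _)
  zero_mul a := carrier_ext P S (Bool.false_and a.1.1) (fun i => (hS i).zero_mul _)
  one_ne_zero h := Bool.noConfusion (congrArg (fun x : Carrier P S => x.1.1) h)
  mul_ne_zero a b ha hb := by
    rw [ne_zero_iff P S hS] at ha hb ⊢
    show (a.1.1 && b.1.1) = true
    rw [ha, hb]
    rfl
  exists_inv a ha := by
    rw [ne_zero_iff P S hS] at ha
    have hnz : ∀ i, a.1.2 i ≠ (S i).zero := fun i => (a.2 i).mp ha
    have hinv := fun i => (hS i).exists_inv (a.1.2 i) (hnz i)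
    refine ⟨⟨(true, fun i => (hinv i).choose), fun i => ?_⟩, ?_⟩
    · simp only [true_iff]
      intro h0
      have := (hinv i).choose_spec
      rw [h0, mul_zero' (hS i)] at this
      exact (hS i).one_ne_zero this.symm
    · refine carrier_ext P S ?_ (fun i => (hinv i).choose_spec)
      show (a.1.1 && true) = true
      rw [ha]
      rfl
  neg_neg a := carrier_ext P S rfl (fun i => (hS i).neg_neg _)
  neg_zero := carrier_ext P S rfl (fun i => (hS i).neg_zero)
  null_swap_left a b c h :=
    ⟨fun i => (hS i).null_swap_left _ _ _ (h.1 i), Kr_swap_left _ _ _ h.2⟩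
  null_swap_right a b c h :=
    ⟨fun i => (hS i).null_swap_right _ _ _ (h.1 i), Kr_swap_right _ _ _ h.2⟩
  null_mul d a b c h :=
    ⟨fun i => (hS i).null_mul _ _ _ _ (h.1 i), Kr_mul _ _ _ _ h.2⟩
  null_zero a b := by
    constructor
    · rintro ⟨hn, hk⟩
      refine carrier_ext P S ((Kr_zero _ _).mp hk) (fun i => ?_)
      exact ((hS i).null_zero _ _).mp (hn i)
    · intro h
      rw [h]
      exact ⟨fun i => ((hS i).null_zero _ _).mpr rfl, (Kr_zero _ _).mpr rfl⟩

end ProdPasture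

/-- **The category of pastures has arbitrary (set-indexed) products.**
For any index set `I` and family of pastures `(P i)_{i ∈ I}` there is a
pasture `Q` with morphisms `π j : Q → P j` such that for every pasture `P'`
with morphisms `f i : P' → P i` there is a unique morphism `g : P' → Q`
with `π j ∘ g = f j` for all `j`. -/
theorem pastures_have_products
    {I : Type v} (P : I → Type u) (S : ∀ i, PastureStr (P i))
    (hS : ∀ i, (S i).IsPasture) :
    ∃ (Q : Type (max u v)) (SQ : PastureStr Q), SQ.IsPasture ∧
      ∃ π : ∀ j, Q → P j, (∀ j, PastureStr.IsHom SQ (S j) (π j)) ∧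
        ∀ (P' : Type w) (S' : PastureStr P'), S'.IsPasture →
          ∀ f : ∀ i, P' → P i, (∀ i, PastureStr.IsHom S' (S i) (f i)) →
            ∃! g : P' → Q, PastureStr.IsHom S' SQ g ∧ ∀ j, π j ∘ g = f j := by
  classical
  open ProdPasture in
  refine ⟨Carrier P S, str P S hS, str_isPasture P S hS,
    fun j x => x.1.2 j, fun j => ⟨fun a b => rfl, rfl, rfl, fun a => rfl,
      fun a b c h => h.1 j⟩, ?_⟩
  intro P' S' hS' f hf
  -- the induced map
  refine ⟨fun p => ⟨(if p = S'.zero then false else true, fun i => f i p), fun i => ?_⟩,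
    ⟨⟨?_, ?_, ?_, ?_, ?_⟩, fun j => rfl⟩, ?_⟩
  · -- well-definedness
    show (if p = S'.zero then false else true) = true ↔ f i p ≠ (S i).zero
    by_cases hp : p = S'.zero
    · rw [if_pos hp, hp, (hf i).map_zero]
      simp
    · rw [if_neg hp]
      simp only [true_iff]
      exact hom_ne_zero hS' (hS i) (hf i) hp
  · -- map_mul
    intro a b
    refine carrier_ext P S ?_ (fun i => (hf i).map_mul a b)
    show (if S'.mul a b = S'.zero then false else true)
      = ((if a = S'.zero then false else true) && (if b = S'.zero then false else true))
    by_cases ha : a = S'.zero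
    · rw [if_pos ha,
        if_pos (show S'.mul a b = S'.zero by rw [ha]; exact hS'.zero_mul b),
        Bool.false_and]
    · by_cases hb : b = S'.zero
      · rw [if_pos hb,
          if_pos (show S'.mul a b = S'.zero by rw [hb]; exact mul_zero' hS' a),
          Bool.and_false]
      · rw [if_neg ha, if_neg hb, if_neg (hS'.mul_ne_zero a b ha hb), Bool.true_and]
  · -- map_zero
    refine carrier_ext P S ?_ (fun i => (hf i).map_zero)
    show (if S'.zero = S'.zero then false else true) = false
    rw [if_pos rfl]
  · -- map_one
    refine carrier_ext P S ?_ (fun i => (hf i).map_one)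
    show (if S'.one = S'.zero then false else true) = true
    rw [if_neg hS'.one_ne_zero]
  · -- map_neg
    intro a
    refine carrier_ext P S ?_ (fun i => (hf i).map_neg a)
    show (if S'.neg a = S'.zero then false else true)
      = (if a = S'.zero then false else true)
    by_cases ha : a = S'.zero
    · rw [if_pos ((neg_eq_zero hS').mpr ha), if_pos ha]
    · rw [if_neg (fun h => ha ((neg_eq_zero hS').mp h)), if_neg ha]
  · -- map_null
    intro a b c hn
    refine ⟨fun i => (hf i).map_null a b c hn, ?_⟩
    obtain ⟨k1, k2, k3⟩ := not_one_nonzero hS' hn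
    by_cases ha : a = S'.zero <;> by_cases hb : b = S'.zero <;> by_cases hc : c = S'.zero
    · show Kr (if a = S'.zero then false else true) (if b = S'.zero then false else true)
        (if c = S'.zero then false else true)
      rw [if_pos ha, if_pos hb, if_pos hc]; decide
    · show Kr (if a = S'.zero then false else true) (if b = S'.zero then false else true)
        (if c = S'.zero then false else true)
      rw [if_pos ha, if_pos hb, if_neg hc]
      exact absurd ⟨hc, ha, hb⟩ k3
    · show Kr (if a = S'.zero then false else true) (if b = S'.zero then false else true)
        (if c = S'.zero then false else true)
      rw [if_pos ha, if_neg hb, if_pos hc]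
      exact absurd ⟨hb, ha, hc⟩ k2
    · show Kr (if a = S'.zero then false else true) (if b = S'.zero then false else true)
        (if c = S'.zero then false else true)
      rw [if_pos ha, if_neg hb, if_neg hc]; decide
    · show Kr (if a = S'.zero then false else true) (if b = S'.zero then false else true)
        (if c = S'.zero then false else true)
      rw [if_neg ha, if_pos hb, if_pos hc]
      exact absurd ⟨ha, hb, hc⟩ k1
    · show Kr (if a = S'.zero then false else true) (if b = S'.zero then false else true)
        (if c = S'.zero then false else true)
      rw [if_neg ha, if_pos hb, if_neg hc]; decide
    · show Kr (if a = S'.zero then false else true) (if b = S'.zero then false else true)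
        (if c = S'.zero then false else true)
      rw [if_neg ha, if_neg hb, if_pos hc]; decide
    · show Kr (if a = S'.zero then false else true) (if b = S'.zero then false else true)
        (if c = S'.zero then false else true)
      rw [if_neg ha, if_neg hb, if_neg hc]; decide
  · -- uniqueness
    rintro g' ⟨hg', hcomm⟩
    funext p
    refine carrier_ext P S ?_ (fun i => ?_)
    · show (g' p).1.1 = (if p = S'.zero then false else true)
      by_cases hp : p = S'.zero
      · rw [if_pos hp, hp, hg'.map_zero]
        rfl
      · rw [if_neg hp]
        obtain ⟨q, hq⟩ := hS'.exists_inv p hp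
        have h1 : (str P S hS).mul (g' p) (g' q) = (str P S hS).one := by
          rw [← hg'.map_mul, hq, hg'.map_one]
        have h2 : ((g' p).1.1 && (g' q).1.1) = true :=
          congrArg (fun x : Carrier P S => x.1.1) h1
        exact (Bool.and_eq_true _ _).mp h2 |>.1
    · exact congrFun (hcomm i) p
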